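/- Suppose A = {a_0 < a_1 < ⋯ < a_k} is a chain in P containing all minimal and maximal elements of P. For 0 ≤ i ≤ k let φ^i : A → ℝ be defined by φ^i(a_j) = 1 if j ≥ i and φ^i(a_j) = 0 otherwise, and let Φ_i = O_{P,A}(φ^i). Then for every order preserving map λ : A → ℝ, setting μ_0 = λ(a_0) and μ_i = λ(a_i) − λ(a_{i−1}) for 1 ≤ i ≤ k, one has the Minkowski sum decomposition O_{P,A}(λ) = {μ_0 · 1_P} + μ_1 Φ_1 + μ_2 Φ_2 + ⋯ + μ_k Φ_k, where 1_P ∈ ℝ^P is the constant function with value 1. -/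

import Mathlib

open scoped Pointwise

/-- The marked order polytope `O_{P,A}(λ)`: order preserving maps `P → ℝ`
agreeing with `lam` on the marked subset `A`. -/
def markedOrderPolytope (P : Type*) [PartialOrder P] (A : Set P) (lam : P → ℝ) :
    Set (P → ℝ) :=
  {φ | Monotone φ ∧ ∀ a ∈ A, φ a = lam a}

private lemma finTelescope {k : ℕ} (f : Fin (k + 1) → ℝ) :
    ∑ i : Fin k, (f i.succ - f i.castSucc) = f (Fin.last k) - f 0 := by
  induction k with
  | zero => simp
  | succ n ih =>
    have h := ih (fun i => f i.castSucc)
    simp only [Fin.castSucc_zero] at h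
    rw [Fin.sum_univ_castSucc]
    simp only [Fin.succ_castSucc]
    rw [h, Fin.succ_last]
    ring

private lemma min_sub_min_mono {a b s t : ℝ} (hab : a ≤ b) (hst : s ≤ t) :
    min s b - min s a ≤ min t b - min t a := by
  simp only [min_def]; split_ifs <;> linarith

theorem stmt9 (P : Type*) [Fintype P] [PartialOrder P] (k : ℕ)
    (a : Fin (k + 1) → P) (ha : StrictMono a)
    (A : Set P) (hA : A = Set.range a)
    (hmin : ∀ p : P, IsMin p → p ∈ A) (hmax : ∀ p : P, IsMax p → p ∈ A)
    (φ : Fin (k + 1) → P → ℝ)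
    (hφ : ∀ i j : Fin (k + 1), φ i (a j) = if i ≤ j then 1 else 0)
    (lam : P → ℝ) (hlam : ∀ x ∈ A, ∀ y ∈ A, x ≤ y → lam x ≤ lam y) :
    markedOrderPolytope P A lam =
      {fun _ => lam (a 0)} +
        ∑ i : Fin k,
          (lam (a i.succ) - lam (a i.castSucc)) • markedOrderPolytope P A (φ i.succ) := by
  classical
  subst hA
  set c : Fin (k + 1) → ℝ := fun j => lam (a j) with hc_def
  have hmemA : ∀ j, a j ∈ Set.range a := fun j => ⟨j, rfl⟩
  have hc : Monotone c := fun i j hij => hlam _ (hmemA i) _ (hmemA j) (ha.monotone hij)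
  have hcs : ∀ i : Fin k, i.castSucc ≤ i.succ := fun i => Fin.castSucc_lt_succ.le
  have hμ : ∀ i : Fin k, (0:ℝ) ≤ c i.succ - c i.castSucc :=
    fun i => sub_nonneg.2 (hc (hcs i))
  have hnotle : ∀ (i : Fin k) (j : Fin (k+1)), ¬ i.succ ≤ j → j ≤ i.castSucc := by
    intro i j h
    rw [Fin.le_def]
    rw [Fin.le_def] at h
    simp only [Fin.val_succ, Fin.coe_castSucc] at *
    omega
  -- the canonical member of each Φ_{i+1}
  have hψ : ∀ i : Fin k, (fun p => if a i.succ ≤ p then (1:ℝ) else 0) ∈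
      markedOrderPolytope P (Set.range a) (φ i.succ) := by
    intro i
    constructor
    · intro p q hpq
      by_cases h : a i.succ ≤ p
      · simp [h, h.trans hpq]
      · by_cases h' : a i.succ ≤ q <;> simp [h, h']
    · rintro _ ⟨j, rfl⟩
      rw [hφ]
      by_cases h : i.succ ≤ j
      · simp [h, ha.monotone h]
      · have h2 : ¬ a i.succ ≤ a j := fun hle => h (ha.le_iff_le.mp hle)
        simp [h, h2]
  ext x
  constructor
  · rintro ⟨hxm, hxv⟩
    have hxa : ∀ j, x (a j) = c j := fun j => hxv _ (hmemA j)
    have hlb : ∀ p, c 0 ≤ x p := by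
      intro p
      obtain ⟨m, hmp, hm⟩ := Finite.exists_le_minimal (a := p) (p := fun _ => True) trivial
      rw [minimal_true] at hm
      obtain ⟨j, hj⟩ := hmin m hm
      calc c 0 ≤ c j := hc (Fin.zero_le j)
        _ = x m := by rw [← hj, hxa]
        _ ≤ x p := hxm hmp
    have hub : ∀ p, x p ≤ c (Fin.last k) := by
      intro p
      obtain ⟨m, hmp, hm⟩ := Finite.exists_le_maximal (a := p) (p := fun _ => True) trivial
      rw [maximal_true] at hm
      obtain ⟨j, hj⟩ := hmax m hm
      calc x p ≤ x m := hxm hmp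
        _ = c j := by rw [← hj, hxa]
        _ ≤ c (Fin.last k) := hc (Fin.le_last j)
    set g : Fin k → P → ℝ := fun i p =>
      if c i.succ - c i.castSucc = 0 then (if a i.succ ≤ p then (1:ℝ) else 0)
      else (min (x p) (c i.succ) - min (x p) (c i.castSucc)) / (c i.succ - c i.castSucc)
      with hg_def
    have hμpos : ∀ i : Fin k, ¬ (c i.succ - c i.castSucc = 0) →
        0 < c i.succ - c i.castSucc := fun i h => lt_of_le_of_ne (hμ i) (Ne.symm h)
    have hg : ∀ i, g i ∈ markedOrderPolytope P (Set.range a) (φ i.succ) := by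
      intro i
      by_cases h : c i.succ - c i.castSucc = 0
      · simpa [hg_def, h] using hψ i
      · constructor
        · intro p q hpq
          simp only [hg_def, if_neg h]
          have hmm := min_sub_min_mono (hc (hcs i)) (hxm hpq)
          exact div_le_div_of_nonneg_right hmm (hμ i)
        · rintro _ ⟨j, rfl⟩
          simp only [hg_def, if_neg h, hxa, hφ]
          by_cases hij : i.succ ≤ j
          · have h1 : c i.succ ≤ c j := hc hij
            have h2 : c i.castSucc ≤ c j := hc ((hcs i).trans hij)
            rw [min_eq_right h1, min_eq_right h2, if_pos hij, div_self h]
          · have h1 : c j ≤ c i.castSucc := hc (hnotle i j hij)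
            have h2 : c j ≤ c i.succ := h1.trans (hc (hcs i))
            rw [min_eq_left h2, min_eq_left h1, if_neg hij, sub_self, zero_div]
    have key : ∀ (i : Fin k) (p : P), (c i.succ - c i.castSucc) * g i p
        = min (x p) (c i.succ) - min (x p) (c i.castSucc) := by
      intro i p
      by_cases h : c i.succ - c i.castSucc = 0
      · have : c i.succ = c i.castSucc := by linarith [sub_eq_zero.mp h]
        simp [h, this]
      · simp only [hg_def, if_neg h]
        rw [mul_div_cancel₀ _ h]
    rw [Set.mem_add]
    refine ⟨fun _ => c 0, rfl, ∑ i : Fin k, (c i.succ - c i.castSucc) • g i, ?_, ?_⟩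
    · rw [Set.mem_fintype_sum]
      exact ⟨fun i => (c i.succ - c i.castSucc) • g i,
        fun i => Set.smul_mem_smul_set (hg i), rfl⟩
    · funext p
      simp only [Pi.add_apply, Finset.sum_apply, Pi.smul_apply, smul_eq_mul]
      have := finTelescope (fun j => min (x p) (c j))
      calc c 0 + ∑ i : Fin k, (c i.succ - c i.castSucc) * g i p
          = c 0 + ∑ i : Fin k, (min (x p) (c i.succ) - min (x p) (c i.castSucc)) := by
            congr 1; exact Finset.sum_congr rfl fun i _ => key i p
        _ = c 0 + (min (x p) (c (Fin.last k)) - min (x p) (c 0)) := by rw [this]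
        _ = x p := by rw [min_eq_left (hub p), min_eq_right (hlb p)]; ring
  · intro hx
    rw [Set.mem_add] at hx
    obtain ⟨y, hy, z, hz, hyz⟩ := hx
    rw [Set.mem_singleton_iff] at hy
    rw [Set.mem_fintype_sum] at hz
    obtain ⟨f, hf, hfz⟩ := hz
    choose g hgmem hgeq using fun i => Set.mem_smul_set.mp (hf i)
    have hxp : ∀ p, x p = c 0 + ∑ i : Fin k, (c i.succ - c i.castSucc) * g i p := by
      intro p
      rw [← hyz, hy]
      simp only [Pi.add_apply, ← hfz, Finset.sum_apply]
      congr 1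
      exact Finset.sum_congr rfl fun i _ => by rw [← hgeq i]; rfl
    constructor
    · intro p q hpq
      rw [hxp p, hxp q]
      refine add_le_add_right (Finset.sum_le_sum fun i _ => ?_) _
      exact mul_le_mul_of_nonneg_left ((hgmem i).1 hpq) (hμ i)
    · rintro _ ⟨j, rfl⟩
      rw [hxp]
      have hgval : ∀ i : Fin k, g i (a j) = if i.succ ≤ j then (1:ℝ) else 0 := by
        intro i
        rw [(hgmem i).2 _ (hmemA j), hφ]
      have key : ∀ i : Fin k, (c i.succ - c i.castSucc) * g i (a j)
          = min (c j) (c i.succ) - min (c j) (c i.castSucc) := by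
        intro i
        rw [hgval i]
        by_cases hij : i.succ ≤ j
        · have h1 : c i.succ ≤ c j := hc hij
          have h2 : c i.castSucc ≤ c j := hc ((hcs i).trans hij)
          rw [if_pos hij, min_eq_right h1, min_eq_right h2, mul_one]
        · have h1 : c j ≤ c i.castSucc := hc (hnotle i j hij)
          have h2 : c j ≤ c i.succ := h1.trans (hc (hcs i))
          rw [if_neg hij, min_eq_left h2, min_eq_left h1, mul_zero, sub_self]
      calc c 0 + ∑ i : Fin k, (c i.succ - c i.castSucc) * g i (a j)
          = c 0 + ∑ i : Fin k, (min (c j) (c i.succ) - min (c j) (c i.castSucc)) := by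
            congr 1; exact Finset.sum_congr rfl fun i _ => key i
        _ = c 0 + (min (c j) (c (Fin.last k)) - min (c j) (c 0)) := by
            rw [finTelescope (fun j' => min (c j) (c j'))]
        _ = lam (a j) := by
            rw [min_eq_left (hc (Fin.le_last j)), min_eq_right (hc (Fin.zero_le j))]
            simp [hc_def]
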